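/- arXiv:1807.11523 — 2 statements merged into one kernel-verified Lean document; each statement's English description precedes it below -/
import Mathlib

section
/- Let H be a strongly primary monoid that is not half-factorial. Then ρ(H) is the only limit point of the set {ρ(a) : a ∈ H} of elasticities: there is no real number r with 1 ≤ r < ρ(H) which is a limit point of {ρ(a) : a ∈ H}. -/
open Filter Topology

/-- The set of factorization lengths of `a`: the set of all `k` such that `a` is a
product of `k` atoms (irreducibles); by convention it is `{0}` for units. -/
noncomputable def lengthSet (H : Type*) [CommMonoid H] (a : H) : Set ℕ :=
  open Classical in
  if IsUnit a then {0}
  else {k | ∃ f : Fin k → H, (∀ i, Irreducible (f i)) ∧ a = ∏ i, f i}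

/-- The elasticity `ρ(a) = max L(a) / min L(a)` of an element of a BF-monoid,
with `ρ(a) = 1` for units. -/
noncomputable def elasticity (H : Type*) [CommMonoid H] (a : H) : ℝ :=
  open Classical in
  if IsUnit a then 1
  else ((sSup (lengthSet H a) : ℕ) : ℝ) / ((sInf (lengthSet H a) : ℕ) : ℝ)

/-- The elasticity `ρ(H) = sup {ρ(a) : a ∈ H} ∈ ℝ≥1 ∪ {∞}` of the monoid `H`. -/
noncomputable def monoidElasticity (H : Type*) [CommMonoid H] : EReal :=
  ⨆ a : H, ((elasticity H a : ℝ) : EReal)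

/-- The set `R̄(H)` of asymptotic elasticities `ρ̄(a) = lim_{n → ∞} ρ(aⁿ)`
of nonunits `a ∈ H` (membership requires the limit to exist). -/
def asympSet (H : Type*) [CommMonoid H] : Set EReal :=
  {r | ∃ a : H, ¬ IsUnit a ∧
    Tendsto (fun n : ℕ => ((elasticity H (a ^ n) : ℝ) : EReal)) atTop (nhds r)}

/-- `H` is locally finitely generated: for every `a ∈ H` there are only finitely many
atoms, up to associates, dividing some power of `a`. -/
def LocallyFinitelyGenerated (H : Type*) [CommMonoid H] : Prop :=
  ∀ a : H, {u : Associates H | Irreducible u ∧ ∃ n : ℕ, u ∣ Associates.mk (a ^ n)}.Finite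

/-- `H` is a BF-monoid: atomic (every nonunit has a factorization into atoms) and
all sets of lengths are finite. -/
def IsBFMonoid (H : Type*) [CommMonoid H] : Prop :=
  (∀ a : H, ¬ IsUnit a → (lengthSet H a).Nonempty) ∧ ∀ a : H, (lengthSet H a).Finite

/-- `(k, ℓ) ≠ (0,0)` is a nice pair with respect to `(a, b)` if
`max L((aᵏbˡ)ᵗ) = t · max L(aᵏbˡ)` and `min L((aᵏbˡ)ᵗ) = t · min L(aᵏbˡ)` for all `t ∈ ℕ`. -/
def IsNicePair (H : Type*) [CommMonoid H] (a b : H) (k ℓ : ℕ) : Prop :=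
  ¬ (k = 0 ∧ ℓ = 0) ∧ ∀ t : ℕ, 0 < t →
    sSup (lengthSet H ((a ^ k * b ^ ℓ) ^ t)) = t * sSup (lengthSet H (a ^ k * b ^ ℓ)) ∧
    sInf (lengthSet H ((a ^ k * b ^ ℓ) ^ t)) = t * sInf (lengthSet H (a ^ k * b ^ ℓ))

/-- `H` is strongly primary: `H ≠ H^×` and for every nonunit `a` there is `n ∈ ℕ`
such that every product of `n` nonunits of `H` is divisible by `a`. -/
def StronglyPrimary (H : Type*) [CommMonoid H] : Prop :=
  (∃ a : H, ¬ IsUnit a) ∧ ∀ a : H, ¬ IsUnit a → ∃ n : ℕ, 0 < n ∧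
    ∀ f : Fin n → H, (∀ i, ¬ IsUnit (f i)) → a ∣ ∏ i, f i

/-- `H` is half-factorial: atomic and `|L(a)| = 1` for every `a ∈ H`. -/
def IsHalfFactorial (H : Type*) [CommMonoid H] : Prop :=
  ∀ a : H, ∃ k : ℕ, lengthSet H a = {k}


section Helpers
set_option linter.unusedSectionVars false
set_option linter.unusedVariables false
variable {H : Type*} [CancelCommMonoid H]

lemma list_get_mem' (l : List H) (i : Fin l.length) : l.get i ∈ l := List.get_mem l i

lemma prod_get (l : List H) : ∏ i, l.get i = l.prod := by
  conv_rhs => rw [← List.ofFn_get l]; rw [List.prod_ofFn]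


lemma mem_lengthSet_iff_list {a : H} (ha : ¬ IsUnit a) {k : ℕ} :
    k ∈ lengthSet H a ↔ ∃ l : List H, (∀ x ∈ l, Irreducible x) ∧ a = l.prod ∧ l.length = k := by
  simp only [lengthSet, if_neg ha, Set.mem_setOf_eq]
  constructor
  · rintro ⟨f, hf, rfl⟩
    exact ⟨List.ofFn f, by simpa [List.mem_ofFn] using fun i => hf i,
      (List.prod_ofFn).symm, List.length_ofFn⟩
  · rintro ⟨l, hl, rfl, rfl⟩
    exact ⟨l.get, fun i => hl _ (list_get_mem' l i), (prod_get l).symm⟩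

lemma dvd_of_le_length {c : H} {n : ℕ} (hn : 0 < n)
    (hdvd : ∀ f : Fin n → H, (∀ i, ¬ IsUnit (f i)) → c ∣ ∏ i, f i)
    {l : List H} (hl : ∀ x ∈ l, ¬ IsUnit x) (hlen : n ≤ l.length) : c ∣ l.prod := by
  have htake : (l.take n).length = n := by rw [List.length_take]; omega
  have hfd : c ∣ ∏ i : Fin n, (l.take n).get (Fin.cast htake.symm i) :=
    hdvd _ fun i => hl _ (List.mem_of_mem_take (list_get_mem' _ _))
  have h1 : ∏ i : Fin n, (l.take n).get (Fin.cast htake.symm i) = (l.take n).prod := by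
    rw [← prod_get (l.take n)]
    exact Fintype.prod_equiv (finCongr htake.symm) _ _ (fun i => rfl)
  rw [h1] at hfd
  calc c ∣ (l.take n).prod := hfd
    _ ∣ l.prod := Dvd.intro _ (by rw [← List.prod_append, List.take_append_drop])

/-- any factorization of `a` into nonunits has length ≤ n(a). -/
lemma length_le_of_nonunits {a : H} {n : ℕ} (hn : 0 < n)
    (hdvd : ∀ f : Fin n → H, (∀ i, ¬ IsUnit (f i)) → a ∣ ∏ i, f i)
    {l : List H} (hl : ∀ x ∈ l, ¬ IsUnit x) (hprod : a = l.prod) : l.length ≤ n := by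
  by_contra h
  push_neg at h
  -- a ∣ (l.take n).prod
  have htake : (l.take n).length = n := by rw [List.length_take]; omega
  have hfd : a ∣ (l.take n).prod := by
    have := dvd_of_le_length hn hdvd (l := l.take n)
      (fun x hx => hl x (List.mem_of_mem_take hx)) (by omega)
    exact this
  obtain ⟨t, ht⟩ := hfd
  have hsplit : l.prod = (l.take n).prod * (l.drop n).prod := by
    rw [← List.prod_append, List.take_append_drop]
  have h1 : (1 : H) = t * (l.drop n).prod := by
    refine mul_left_cancel (a := a) ?_
    rw [mul_one]
    conv_lhs => rw [hprod, hsplit, ht]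
    rw [mul_assoc]
  have hdroplen : 0 < (l.drop n).length := by rw [List.length_drop]; omega
  obtain ⟨x, hx⟩ := List.exists_mem_of_length_pos hdroplen
  have : IsUnit x := by
    have hxd : x ∣ (1 : H) := (List.dvd_prod hx).trans ⟨t, by rw [h1]; exact mul_comm _ _⟩
    exact isUnit_of_dvd_one hxd
  exact hl x (List.mem_of_mem_drop hx) this

/-- atomicity: lengthSet of a nonunit is nonempty -/
lemma lengthSet_nonempty {a : H} (ha : ¬ IsUnit a) {n : ℕ} (hn : 0 < n)
    (hdvd : ∀ f : Fin n → H, (∀ i, ¬ IsUnit (f i)) → a ∣ ∏ i, f i) :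
    (lengthSet H a).Nonempty := by
  classical
  set K : Set ℕ := {k | ∃ l : List H, (∀ x ∈ l, ¬ IsUnit x) ∧ a = l.prod ∧ l.length = k} with hK
  have hKne : 1 ∈ K := ⟨[a], by simpa using ha, by simp, rfl⟩
  have hKbdd : BddAbove K := by
    refine ⟨n, fun k hk => ?_⟩
    obtain ⟨l, hl, hp, rfl⟩ := hk
    exact length_le_of_nonunits hn hdvd hl hp
  have hmem := Nat.sSup_mem ⟨1, hKne⟩ hKbdd
  obtain ⟨l, hl, hp, hlen⟩ := hmem
  -- all elements of l are irreducible
  refine ⟨sSup K, ?_⟩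
  rw [show (lengthSet H a) = {k | ∃ f : Fin k → H, (∀ i, Irreducible (f i)) ∧ a = ∏ i, f i}
    from if_neg ha]
  have hirr : ∀ x ∈ l, Irreducible x := by
    intro x hx
    refine ⟨hl x hx, fun b c hbc => ?_⟩
    by_contra hbad
    push_neg at hbad
    obtain ⟨hb, hc⟩ := hbad
    -- construct longer list
    have hperm : l.Perm (x :: l.erase x) := List.perm_cons_erase hx
    set l' : List H := b :: c :: l.erase x with hl'
    have hl'nonunit : ∀ y ∈ l', ¬ IsUnit y := by
      intro y hy
      rcases List.mem_cons.mp hy with rfl | hy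
      · exact hb
      rcases List.mem_cons.mp hy with rfl | hy
      · exact hc
      · exact hl y (List.mem_of_mem_erase hy)
    have hl'prod : a = l'.prod := by
      rw [hp, hperm.prod_eq]
      simp [hl', hbc, mul_assoc]
    have : l'.length ∈ K := ⟨l', hl'nonunit, hl'prod, rfl⟩
    have hle := le_csSup hKbdd this
    have hlpos : 0 < l.length := List.length_pos_of_mem hx
    have : l'.length = l.length + 1 := by
      simp only [hl', List.length_cons, List.length_erase_of_mem hx]
      omega
    omega
  -- convert list to Fin function
  refine ⟨fun i => l.get (Fin.cast hlen.symm i), fun i => hirr _ (list_get_mem' _ _), ?_⟩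
  rw [hp, ← prod_get l]
  exact (Fintype.prod_equiv (finCongr hlen.symm) _ _ (fun i => rfl)).symm
end Helpers

section Helpers2
set_option linter.unusedSectionVars false
set_option linter.unusedVariables false
variable {H : Type*} [CancelCommMonoid H]

lemma lengthSet_subset_Icc {a : H} (ha : ¬ IsUnit a) {n : ℕ} (hn : 0 < n)
    (hdvd : ∀ f : Fin n → H, (∀ i, ¬ IsUnit (f i)) → a ∣ ∏ i, f i) :
    lengthSet H a ⊆ Set.Icc 1 n := by
  intro k hk
  obtain ⟨l, hl, hp, rfl⟩ := (mem_lengthSet_iff_list ha).mp hk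
  constructor
  · rcases Nat.eq_zero_or_pos l.length with h0 | h1
    · exfalso
      rw [List.length_eq_zero_iff] at h0
      exact ha (by rw [hp, h0]; simp)
    · exact h1
  · exact length_le_of_nonunits hn hdvd (fun x hx => (hl x hx).not_isUnit) hp

/-- concatenation: superadditivity of length sets -/
lemma add_mem_lengthSet {a b : H} (ha : ¬ IsUnit a) (hb : ¬ IsUnit b) {k m : ℕ}
    (hk : k ∈ lengthSet H a) (hm : m ∈ lengthSet H b) : k + m ∈ lengthSet H (a * b) := by
  have hab : ¬ IsUnit (a * b) := fun h => ha (isUnit_of_mul_isUnit_left h)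
  obtain ⟨l1, hl1, hp1, rfl⟩ := (mem_lengthSet_iff_list ha).mp hk
  obtain ⟨l2, hl2, hp2, rfl⟩ := (mem_lengthSet_iff_list hb).mp hm
  refine (mem_lengthSet_iff_list hab).mpr ⟨l1 ++ l2, ?_, ?_, by simp⟩
  · intro x hx; rcases List.mem_append.mp hx with h | h
    exacts [hl1 x h, hl2 x h]
  · rw [List.prod_append, hp1, hp2]

/-- multiplication by a unit doesn't change length sets -/
lemma lengthSet_mul_unit {a : H} (ha : ¬ IsUnit a) {u : H} (hu : IsUnit u) :
    lengthSet H (a * u) = lengthSet H a := by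
  have key : ∀ (c v : H), ¬ IsUnit c → IsUnit v → lengthSet H c ⊆ lengthSet H (c * v) := by
    intro c v hc hv k hk
    have hcv : ¬ IsUnit (c * v) := fun h => hc (isUnit_of_mul_isUnit_left h)
    obtain ⟨l, hl, hp, rfl⟩ := (mem_lengthSet_iff_list hc).mp hk
    have hlpos : l ≠ [] := by
      rintro rfl
      exact hc (by rw [hp]; simp)
    obtain ⟨x, l', rfl⟩ := List.exists_cons_of_ne_nil hlpos
    refine (mem_lengthSet_iff_list hcv).mpr ⟨(x * v) :: l', ?_, ?_, by simp⟩
    · intro y hy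
      rcases List.mem_cons.mp hy with rfl | hy
      · exact ((associated_mul_unit_right x v hv).irreducible (hl x (by simp)))
      · exact hl y (by simp [hy])
    · rw [List.prod_cons, hp, List.prod_cons]
      rw [mul_comm x v, mul_assoc v x, mul_comm v (x * l'.prod)]
  have hau : ¬ IsUnit (a * u) := fun h => ha (isUnit_of_mul_isUnit_left h)
  apply le_antisymm
  · have := key (a * u) (↑hu.unit⁻¹) hau (by simp)
    have he : a * u * ↑hu.unit⁻¹ = a := by
      rw [mul_assoc, IsUnit.mul_val_inv hu, mul_one]
    rwa [he] at this
  · exact key a u ha hu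

end Helpers2

section Helpers3
set_option linter.unusedSectionVars false
set_option linter.unusedVariables false
variable {H : Type*} [CancelCommMonoid H]

variable (hsp : StronglyPrimary H)
include hsp

lemma lengthSet_bddAbove {a : H} (ha : ¬ IsUnit a) : BddAbove (lengthSet H a) := by
  obtain ⟨n, hn, hdvd⟩ := hsp.2 a ha
  exact ⟨n, fun k hk => ((lengthSet_subset_Icc ha hn hdvd) hk).2⟩

lemma lengthSet_ne {a : H} (ha : ¬ IsUnit a) : (lengthSet H a).Nonempty := by
  obtain ⟨n, hn, hdvd⟩ := hsp.2 a ha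
  exact lengthSet_nonempty ha hn hdvd

lemma maxL_mem {a : H} (ha : ¬ IsUnit a) : sSup (lengthSet H a) ∈ lengthSet H a :=
  Nat.sSup_mem (lengthSet_ne hsp ha) (lengthSet_bddAbove hsp ha)

lemma minL_mem {a : H} (ha : ¬ IsUnit a) : sInf (lengthSet H a) ∈ lengthSet H a :=
  Nat.sInf_mem (lengthSet_ne hsp ha)

lemma one_le_minL {a : H} (ha : ¬ IsUnit a) : 1 ≤ sInf (lengthSet H a) := by
  obtain ⟨n, hn, hdvd⟩ := hsp.2 a ha
  exact ((lengthSet_subset_Icc ha hn hdvd) (minL_mem hsp ha)).1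

lemma minL_le_maxL {a : H} (ha : ¬ IsUnit a) :
    sInf (lengthSet H a) ≤ sSup (lengthSet H a) :=
  le_csSup (lengthSet_bddAbove hsp ha) (minL_mem hsp ha)

lemma maxL_superadd {a b : H} (ha : ¬ IsUnit a) (hb : ¬ IsUnit b) :
    sSup (lengthSet H a) + sSup (lengthSet H b) ≤ sSup (lengthSet H (a * b)) :=
  le_csSup (lengthSet_bddAbove hsp (fun h => ha (isUnit_of_mul_isUnit_left h)))
    (add_mem_lengthSet ha hb (maxL_mem hsp ha) (maxL_mem hsp hb))

lemma minL_subadd {a b : H} (ha : ¬ IsUnit a) (hb : ¬ IsUnit b) :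
    sInf (lengthSet H (a * b)) ≤ sInf (lengthSet H a) + sInf (lengthSet H b) :=
  Nat.sInf_le (add_mem_lengthSet ha hb (minL_mem hsp ha) (minL_mem hsp hb))

/-- Key extraction lemma. -/
lemma extraction {c : H} (hc : ¬ IsUnit c) {n : ℕ} (hn : 0 < n)
    (hdvd : ∀ f : Fin n → H, (∀ i, ¬ IsUnit (f i)) → c ∣ ∏ i, f i) :
    ∀ N : ℕ, ∀ a : H, ¬ IsUnit a → sSup (lengthSet H a) ≤ N →
    ∃ k : ℕ, k * sSup (lengthSet H c) ≤ sSup (lengthSet H a) ∧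
      sInf (lengthSet H a) ≤ k * sInf (lengthSet H c) + n := by
  intro N
  induction N with
  | zero =>
    intro a ha hle
    exact absurd (le_trans (one_le_minL hsp ha) (le_trans (minL_le_maxL hsp ha) hle))
      (by omega)
  | succ N ih =>
    intro a ha hle
    by_cases hsmall : sInf (lengthSet H a) < n
    · exact ⟨0, by simp, by omega⟩
    push_neg at hsmall
    -- c divides a
    obtain ⟨l, hl, hp, hlen⟩ := (mem_lengthSet_iff_list ha).mp (minL_mem hsp ha)
    have hcd : c ∣ a := by
      rw [hp]
      exact dvd_of_le_length hn hdvd (fun x hx => (hl x hx).not_isUnit) (by omega)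
    obtain ⟨b, rfl⟩ := hcd
    by_cases hb : IsUnit b
    · have hLe : lengthSet H (c * b) = lengthSet H c := lengthSet_mul_unit hc hb
      refine ⟨1, ?_, ?_⟩
      · rw [hLe, one_mul]
      · rw [hLe, one_mul]; omega
    · have hmax : sSup (lengthSet H c) + sSup (lengthSet H b) ≤ sSup (lengthSet H (c * b)) :=
        maxL_superadd hsp hc hb
      have hMc : 1 ≤ sSup (lengthSet H c) :=
        le_trans (one_le_minL hsp hc) (minL_le_maxL hsp hc)
      have hMb : 1 ≤ sSup (lengthSet H b) :=
        le_trans (one_le_minL hsp hb) (minL_le_maxL hsp hb)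
      have hble : sSup (lengthSet H b) ≤ N := by omega
      obtain ⟨k, hk1, hk2⟩ := ih b hb hble
      refine ⟨k + 1, ?_, ?_⟩
      · have : (k + 1) * sSup (lengthSet H c)
            = k * sSup (lengthSet H c) + sSup (lengthSet H c) := by ring
        omega
      · have hmin : sInf (lengthSet H (c * b)) ≤ sInf (lengthSet H c) + sInf (lengthSet H b) :=
          minL_subadd hsp hc hb
        have : (k + 1) * sInf (lengthSet H c)
            = k * sInf (lengthSet H c) + sInf (lengthSet H c) := by ring
        omega

end Helpers3

section Final
set_option linter.unusedSectionVars false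
set_option linter.unusedVariables false
variable {H : Type*} [CancelCommMonoid H]

/-- main quantitative lemma: elements with large min length have elasticity close to ρ(c). -/
lemma elasticity_lower (hsp : StronglyPrimary H) {c : H} (hc : ¬ IsUnit c)
    {r ε : ℝ} (hr0 : 0 ≤ r) (hε0 : 0 < ε) (hq : elasticity H c = r + 2 * ε) :
    ∃ B : ℕ, 1 ≤ B ∧ ∀ a : H, ¬ IsUnit a → B ≤ sInf (lengthSet H a) →
      r + ε ≤ elasticity H a := by
  obtain ⟨n, hn, hdvd⟩ := hsp.2 c hc
  set Mc := sSup (lengthSet H c) with hMc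
  set mc := sInf (lengthSet H c) with hmc
  have h1mc : 1 ≤ mc := one_le_minL hsp hc
  have hmcM : mc ≤ Mc := minL_le_maxL hsp hc
  have hmc0 : (0:ℝ) < (mc:ℝ) := by exact_mod_cast h1mc
  have hqe : (Mc : ℝ) = (r + 2*ε) * mc := by
    rw [elasticity, if_neg hc] at hq
    rw [← hMc, ← hmc, div_eq_iff hmc0.ne'] at hq
    linarith [hq]
  set K : ℕ := ⌈(r + ε) * n / (ε * mc)⌉₊ + 1 with hK
  refine ⟨n + mc * K, by omega, ?_⟩
  intro a ha hB
  set Ma := sSup (lengthSet H a) with hMa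
  set ma := sInf (lengthSet H a) with hma
  obtain ⟨k, hk1, hk2⟩ := extraction hsp hc hn hdvd Ma a ha le_rfl
  rw [← hmc] at hk2
  rw [← hMc] at hk1
  rw [← hMa] at hk1
  rw [← hma] at hk2
  -- K ≤ k
  have hKk : K ≤ k := by
    have h1 : mc * K + n ≤ ma := by omega
    have h2 : K * mc ≤ k * mc := by rw [mul_comm K mc]; omega
    exact Nat.le_of_mul_le_mul_right h2 (by omega)
  have h1ma : 1 ≤ ma := one_le_minL hsp ha
  have hma0 : (0:ℝ) < (ma:ℝ) := by exact_mod_cast h1ma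
  rw [elasticity, if_neg ha]
  rw [le_div_iff₀ hma0]
  -- (r+ε) * ma ≤ Ma
  have hcast2 : (ma : ℝ) ≤ k * mc + n := by exact_mod_cast hk2
  have hcast1 : (k : ℝ) * Mc ≤ Ma := by exact_mod_cast hk1
  have hKceil : (r + ε) * n / (ε * mc) ≤ (K : ℝ) := by
    calc (r + ε) * n / (ε * mc) ≤ (⌈(r + ε) * n / (ε * mc)⌉₊ : ℝ) := Nat.le_ceil _
    _ ≤ K := by exact_mod_cast Nat.le_succ _
  have hεmc : (0:ℝ) < ε * mc := by positivity
  have hKge : (r + ε) * n ≤ (K:ℝ) * (ε * mc) := by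
    rwa [div_le_iff₀ hεmc] at hKceil
  have hkK : (K : ℝ) ≤ (k : ℝ) := by exact_mod_cast hKk
  have hkge : (r + ε) * n ≤ (k:ℝ) * (ε * mc) := by nlinarith
  calc (r + ε) * ma ≤ (r + ε) * ((k:ℝ) * mc + n) := by
        apply mul_le_mul_of_nonneg_left hcast2 (by linarith)
    _ ≤ (k:ℝ) * Mc := by nlinarith
    _ ≤ Ma := hcast1

end Final


/-- If `H` is strongly primary and not half-factorial, then `ρ(H)` is
the only limit point of the set of elasticities of `H`: no real `r` with `1 ≤ r < ρ(H)`
is an accumulation point of `{ρ(a) : a ∈ H}`. -/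
theorem statement17 (H : Type*) [CancelCommMonoid H]
    (hsp : StronglyPrimary H) (hhf : ¬ IsHalfFactorial H) :
    ¬ ∃ r : ℝ, 1 ≤ r ∧ ((r : EReal) < monoidElasticity H) ∧
      AccPt r (Filter.principal {x : ℝ | ∃ a : H, elasticity H a = x}) := by
  rintro ⟨r, hr1, hrlt, hacc⟩
  rw [monoidElasticity, lt_iSup_iff] at hrlt
  obtain ⟨c, hc⟩ := hrlt
  rw [EReal.coe_lt_coe_iff] at hc
  have hcu : ¬ IsUnit c := by
    intro h
    rw [elasticity, if_pos h] at hc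
    linarith
  set ε : ℝ := (elasticity H c - r) / 2 with hεdef
  have hε0 : 0 < ε := by rw [hεdef]; linarith
  have hq : elasticity H c = r + 2 * ε := by rw [hεdef]; ring
  obtain ⟨B, hB1, hBprop⟩ := elasticity_lower hsp hcu (by linarith : (0:ℝ) ≤ r) hε0 hq
  set C : ℕ := ⌈(r + ε) * B⌉₊ + 1 with hC
  set S : Set ℝ := {x : ℝ | ∃ a : H, elasticity H a = x} with hS
  set F : Set ℝ := (fun p : ℕ × ℕ => (p.1 : ℝ) / (p.2 : ℝ)) '' (Set.Iic C ×ˢ Set.Iic B) with hF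
  have hFfin : F.Finite := ((Set.finite_Iic C).prod (Set.finite_Iic B)).image _
  have hsub : S ⊆ F ∪ Set.Ici (r + ε) := by
    rintro x ⟨a, rfl⟩
    by_cases hlarge : r + ε ≤ elasticity H a
    · exact Or.inr hlarge
    push_neg at hlarge
    left
    by_cases ha : IsUnit a
    · refine ⟨(1, 1), ?_, ?_⟩
      · constructor
        · simp only [Set.mem_Iic]; omega
        · simp only [Set.mem_Iic]; omega
      · rw [elasticity, if_pos ha]; norm_num
    · have hmaB : sInf (lengthSet H a) < B := by
        by_contra hcon
        push_neg at hcon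
        exact absurd (hBprop a ha hcon) (not_le.mpr hlarge)
      have h1ma : 1 ≤ sInf (lengthSet H a) := one_le_minL hsp ha
      have hma0 : (0:ℝ) < ((sInf (lengthSet H a) : ℕ) : ℝ) := by exact_mod_cast h1ma
      have hel : elasticity H a
          = ((sSup (lengthSet H a) : ℕ) : ℝ) / ((sInf (lengthSet H a) : ℕ) : ℝ) := by
        rw [elasticity, if_neg ha]
      have hMlt : ((sSup (lengthSet H a) : ℕ) : ℝ) < (r + ε) * ((sInf (lengthSet H a) : ℕ) : ℝ) := by
        rw [hel, div_lt_iff₀ hma0] at hlarge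
        exact hlarge
      have hMC : ((sSup (lengthSet H a) : ℕ) : ℝ) < (C : ℝ) := by
        have hstep : (r + ε) * ((sInf (lengthSet H a) : ℕ) : ℝ) ≤ (r + ε) * B := by
          apply mul_le_mul_of_nonneg_left _ (by linarith)
          exact_mod_cast hmaB.le
        calc ((sSup (lengthSet H a) : ℕ) : ℝ) < (r + ε) * ((sInf (lengthSet H a) : ℕ) : ℝ) := hMlt
          _ ≤ (r + ε) * B := hstep
          _ ≤ (⌈(r + ε) * B⌉₊ : ℝ) := Nat.le_ceil _
          _ ≤ (C : ℝ) := by rw [hC]; exact_mod_cast Nat.le_succ _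
      refine ⟨(sSup (lengthSet H a), sInf (lengthSet H a)), ?_, hel.symm⟩
      constructor
      · simp only [Set.mem_Iic]
        exact_mod_cast hMC.le
      · simp only [Set.mem_Iic]
        omega
  -- now derive a contradiction from AccPt
  have hne : ((𝓝[≠] r) ⊓ 𝓟 (F ∪ Set.Ici (r + ε))).NeBot :=
    Filter.NeBot.mono hacc (inf_le_inf le_rfl (Filter.principal_mono.mpr hsub))
  rw [← Filter.sup_principal, inf_sup_left] at hne
  rcases Filter.sup_neBot.mp hne with hne | hne
  · -- F is finite: impossible accumulation
    have hF' : (F \ {r}).Finite := hFfin.subset Set.diff_subset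
    have hclosed : IsClosed (F \ {r}) := hF'.isClosed
    have hmem1 : (F \ {r})ᶜ ∈ 𝓝 r :=
      hclosed.isOpen_compl.mem_nhds (by simp)
    have hmem1' : (F \ {r})ᶜ ∈ 𝓝[≠] r := mem_nhdsWithin_of_mem_nhds hmem1
    have hmem2 : ({r}ᶜ : Set ℝ) ∈ 𝓝[≠] r := self_mem_nhdsWithin
    have hmemF : F ∈ 𝓟 F := Filter.mem_principal_self F
    have hempty : ((F \ {r})ᶜ ∩ {r}ᶜ) ∩ F ∈ (𝓝[≠] r) ⊓ 𝓟 F :=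
      Filter.inter_mem (Filter.mem_inf_of_left (Filter.inter_mem hmem1' hmem2))
        (Filter.mem_inf_of_right hmemF)
    have hsube : ((F \ {r})ᶜ ∩ {r}ᶜ) ∩ F ⊆ (∅ : Set ℝ) := by
      rintro y ⟨⟨hy1, hy2⟩, hy3⟩
      exact absurd ⟨hy3, hy2⟩ hy1
    have : (∅ : Set ℝ) ∈ (𝓝[≠] r) ⊓ 𝓟 F :=
      Filter.mem_of_superset hempty (by simpa using hsube)
    exact hne.ne (Filter.empty_mem_iff_bot.mp this)
  · -- Ici (r + ε) is far from r
    have hmem1 : Set.Iio (r + ε) ∈ 𝓝 r := Iio_mem_nhds (by linarith)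
    have hmem1' : Set.Iio (r + ε) ∈ 𝓝[≠] r := mem_nhdsWithin_of_mem_nhds hmem1
    have hempty : Set.Iio (r + ε) ∩ Set.Ici (r + ε) ∈ (𝓝[≠] r) ⊓ 𝓟 (Set.Ici (r + ε)) :=
      Filter.inter_mem (Filter.mem_inf_of_left hmem1')
        (Filter.mem_inf_of_right (Filter.mem_principal_self _))
    have : (∅ : Set ℝ) ∈ (𝓝[≠] r) ⊓ 𝓟 (Set.Ici (r + ε)) := by
      rwa [Set.Iio_inter_Ici, Set.Ico_self] at hempty
    exact hne.ne (Filter.empty_mem_iff_bot.mp this)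
end

section
/- Let H be a seminormal finitely primary monoid of rank s ≥ 2, i.e. H = H^× ∪ q_1⋯q_s F, where F = F^× × [q_1,…,q_s] is a factorial monoid with s pairwise non-associated prime elements q_1, …, q_s, H is a submonoid of F with H \ H^× ⊆ q_1⋯q_s F, and (q_1⋯q_s)^α F ⊆ H for some α ∈ ℕ. Then the set of elasticities of H is {ρ(a) : a ∈ H} = {n/2 : n ∈ ℕ, n ≥ 2}. -/
open Filter Topology

noncomputable instance {F : Type*} [CancelCommMonoid F] (H : Submonoid F) :
    CancelCommMonoid H :=
  Function.Injective.cancelCommMonoid (Subtype.val : H → F)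
    Subtype.coe_injective rfl (fun _ _ => rfl) (fun _ _ => rfl)

/-- A prime element of a (multiplicatively written, zero-free) commutative monoid:
a nonunit `p` such that `p ∣ a * b` implies `p ∣ a` or `p ∣ b`. -/
def IsPrimeElement {F : Type*} [CommMonoid F] (p : F) : Prop :=
  ¬ IsUnit p ∧ ∀ a b : F, p ∣ a * b → p ∣ a ∨ p ∣ b

section Aux18

variable {F : Type*} [CancelCommMonoid F] {s : ℕ}

/-- `∏ i, q i ^ e i`, the canonical product with exponent vector `e`. -/
def Qp (q : Fin s → F) (e : Fin s → ℕ) : F := ∏ i, q i ^ e i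

theorem Qp_add (q : Fin s → F) (e f : Fin s → ℕ) :
    Qp q (e + f) = Qp q e * Qp q f := by
  simp [Qp, pow_add, Finset.prod_mul_distrib]

theorem Qp_const (q : Fin s → F) (n : ℕ) : Qp q (fun _ => n) = (∏ i, q i) ^ n := by
  simp [Qp, Finset.prod_pow]

theorem primeEl_dvd_prod {p : F} (hp : IsPrimeElement p) {ι : Type*} {t : Finset ι}
    {g : ι → F} : p ∣ ∏ i ∈ t, g i → ∃ i ∈ t, p ∣ g i := by
  classical
  induction t using Finset.induction_on with
  | empty =>
      intro h
      rw [Finset.prod_empty] at h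
      exact absurd (isUnit_of_dvd_one h) hp.1
  | insert _ _ hx ih =>
      intro h
      rw [Finset.prod_insert hx] at h
      rcases hp.2 _ _ h with h1 | h2
      · exact ⟨_, Finset.mem_insert_self _ _, h1⟩
      · obtain ⟨i, hi, hd⟩ := ih h2
        exact ⟨i, Finset.mem_insert_of_mem hi, hd⟩

theorem primeEl_dvd_pow {p x : F} (hp : IsPrimeElement p) {n : ℕ} (h : p ∣ x ^ n) :
    p ∣ x := by
  induction n with
  | zero =>
      rw [pow_zero] at h
      exact absurd (isUnit_of_dvd_one h) hp.1
  | succ n ih =>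
      rw [pow_succ] at h
      rcases hp.2 _ _ h with h1 | h2
      · exact ih h1
      · exact h2

theorem q_ndvd (q : Fin s → F) (hq : ∀ i, IsPrimeElement (q i))
    (hna : ∀ i j, i ≠ j → ¬ Associated (q i) (q j)) {i j : Fin s} (hij : i ≠ j) :
    ¬ q i ∣ q j := by
  rintro ⟨c, hc⟩
  rcases (hq j).2 (q i) c (hc ▸ dvd_rfl) with h1 | h2
  · obtain ⟨d, hd⟩ := h1
    have h3 : q j * (d * c) = q j * 1 := by
      rw [mul_one, ← mul_assoc, ← hd, ← hc]
    have h4 : d * c = 1 := mul_left_cancel h3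
    have hcu : IsUnit c := IsUnit.of_mul_eq_one (a := c) d (by rw [mul_comm]; exact h4)
    exact hna i j hij ⟨hcu.unit, by rw [IsUnit.unit_spec]; exact hc.symm⟩
  · obtain ⟨d, hd⟩ := h2
    have h3 : q j * (q i * d) = q j * 1 := by
      rw [mul_one, ← mul_assoc, mul_comm (q j) (q i), mul_assoc, ← hd, ← hc]
    have h4 : q i * d = 1 := mul_left_cancel h3
    exact (hq i).1 (IsUnit.of_mul_eq_one _ h4)

theorem q_dvd_Qp (q : Fin s → F) (hq : ∀ i, IsPrimeElement (q i))
    (hna : ∀ i j, i ≠ j → ¬ Associated (q i) (q j)) {i : Fin s} {e : Fin s → ℕ}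
    (h : q i ∣ Qp q e) : 1 ≤ e i := by
  obtain ⟨j, -, hj⟩ := primeEl_dvd_prod (hq i) h
  by_cases hji : j = i
  · subst hji
    by_contra h0
    have : e j = 0 := by omega
    rw [this, pow_zero] at hj
    exact (hq j).1 (isUnit_of_dvd_one hj)
  · exact absurd (primeEl_dvd_pow (hq i) hj) (q_ndvd q hq hna (Ne.symm hji))

theorem Qp_succ (q : Fin s → F) {e : Fin s → ℕ} {i : Fin s} (h : 1 ≤ e i) :
    Qp q e = q i * Qp q (fun j => if j = i then e j - 1 else e j) := by
  classical
  have h1 : Qp q e = q i ^ e i * ∏ j ∈ Finset.univ.erase i, q j ^ e j :=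
    (Finset.mul_prod_erase Finset.univ (fun j => q j ^ e j) (Finset.mem_univ i)).symm
  have h2 : Qp q (fun j => if j = i then e j - 1 else e j)
      = q i ^ (e i - 1) * ∏ j ∈ Finset.univ.erase i, q j ^ e j := by
    rw [Qp, ← Finset.mul_prod_erase Finset.univ _ (Finset.mem_univ i)]
    congr 1
    · simp
    · exact Finset.prod_congr rfl fun j hj => by simp [(Finset.mem_erase.mp hj).1]
  have h3 : e i - 1 + 1 = e i := by omega
  rw [h1, h2, ← mul_assoc, ← pow_succ', h3]

theorem exp_unique (q : Fin s → F) (hq : ∀ i, IsPrimeElement (q i))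
    (hna : ∀ i j, i ≠ j → ¬ Associated (q i) (q j)) :
    ∀ (n : ℕ) (e f : Fin s → ℕ) (u w : Fˣ),
    (∑ i, e i) ≤ n → (u : F) * Qp q e = (w : F) * Qp q f → e = f := by
  have hunit : ∀ (f : Fin s → ℕ), IsUnit (Qp q f) → ∀ i, f i = 0 := by
    intro f hf i
    by_contra h0
    have h1 : q i ∣ Qp q f := by
      refine dvd_trans (dvd_pow_self (q i) h0) ?_
      exact Finset.dvd_prod_of_mem _ (Finset.mem_univ i)
    exact (hq i).1 (isUnit_of_dvd_unit h1 hf)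
  have hbase : ∀ (e f : Fin s → ℕ) (u w : Fˣ), (∀ i, e i = 0) →
      (u : F) * Qp q e = (w : F) * Qp q f → e = f := by
    intro e f u w he heq
    have hQe : Qp q e = 1 := by
      rw [Qp]
      exact Finset.prod_eq_one fun i _ => by rw [he i, pow_zero]
    rw [hQe, mul_one] at heq
    have hQf : IsUnit (Qp q f) := by
      refine isUnit_of_dvd_unit ⟨(w : F), by rw [heq, mul_comm]⟩ u.isUnit
    funext i
    rw [he i, hunit f hQf i]
  intro n
  induction n with
  | zero =>
      intro e f u w hn heq
      refine hbase e f u w (fun i => ?_) heq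
      have := Finset.sum_eq_zero_iff.mp (Nat.le_zero.mp hn)
      exact this i (Finset.mem_univ i)
  | succ n ih =>
      intro e f u w hn heq
      by_cases h0 : ∀ i, e i = 0
      · exact hbase e f u w h0 heq
      · push_neg at h0
        obtain ⟨i, hi⟩ := h0
        have hei : 1 ≤ e i := Nat.one_le_iff_ne_zero.mpr hi
        have hfi : 1 ≤ f i := by
          have hd : q i ∣ (w : F) * Qp q f := by
            rw [← heq]
            refine Dvd.dvd.mul_left ?_ _
            refine dvd_trans (dvd_pow_self (q i) (n := e i) (by omega)) ?_
            exact Finset.dvd_prod_of_mem _ (Finset.mem_univ i)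
          rcases (hq i).2 _ _ hd with h1 | h2
          · exact absurd (isUnit_of_dvd_unit h1 w.isUnit) (hq i).1
          · exact q_dvd_Qp q hq hna h2
        rw [Qp_succ q hei, Qp_succ q hfi] at heq
        have heq2 : (u : F) * Qp q (fun j => if j = i then e j - 1 else e j)
            = (w : F) * Qp q (fun j => if j = i then f j - 1 else f j) := by
          apply mul_left_cancel (a := q i)
          rw [mul_left_comm, heq, mul_left_comm]
        have hsum : (∑ j, (if j = i then e j - 1 else e j)) ≤ n := by
          have hlt : (∑ j, (if j = i then e j - 1 else e j)) < ∑ j, e j := by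
            refine Finset.sum_lt_sum (fun j _ => by split <;> omega)
              ⟨i, Finset.mem_univ i, by rw [if_pos rfl]; omega⟩
          omega
        have := ih _ _ u w hsum heq2
        funext j
        have hj := congrFun this j
        by_cases hji : j = i
        · subst hji; rw [if_pos rfl, if_pos rfl] at hj; omega
        · simpa [hji] using hj

end Aux18


/-- Let `H = H^× ∪ q₁⋯q_s F` be a seminormal finitely primary monoid
of rank `s ≥ 2`, where `F = F^× × [q₁, …, q_s]` is factorial with pairwise
non-associated primes `q₁, …, q_s`. Then `{ρ(a) : a ∈ H} = {n/2 : n ∈ ℕ, n ≥ 2}`. -/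
theorem statement18 (F : Type*) [CancelCommMonoid F] (s : ℕ) (hs : 2 ≤ s)
    (q : Fin s → F) (hq : ∀ i, IsPrimeElement (q i))
    (hna : ∀ i j, i ≠ j → ¬ Associated (q i) (q j))
    (hF : ∀ x : F, ∃ (u : Fˣ) (e : Fin s → ℕ), x = (u : F) * ∏ i, q i ^ e i)
    (H : Submonoid F)
    (hsub : ∀ x : F, (∏ i, q i) * x ∈ H)
    (hsemi : ∀ x : H, ¬ IsUnit x → ∃ y : F, (x : F) = (∏ i, q i) * y) :
    {t : ℝ | ∃ a : H, elasticity H a = t} =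
      {t : ℝ | ∃ n : ℕ, 2 ≤ n ∧ t = (n : ℝ) / 2} := by
  classical
  have hs0 : 0 < s := by omega
  set P : F := ∏ i, q i with hPdef
  choose U E hUE using hF
  have hQE : ∀ x : F, x = (U x : F) * Qp q (E x) := hUE
  have uniq : ∀ (u w : Fˣ) (e f : Fin s → ℕ),
      (u : F) * Qp q e = (w : F) * Qp q f → e = f :=
    fun u w e f h => exp_unique q hq hna (∑ i, e i) e f u w le_rfl h
  have hE_eq : ∀ (x : F) (u : Fˣ) (e : Fin s → ℕ), x = (u : F) * Qp q e → E x = e :=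
    fun x u e hx => uniq (U x) u _ _ (by rw [← hQE, hx])
  have hE_mul : ∀ x y : F, E (x * y) = E x + E y := by
    intro x y
    apply hE_eq _ (U x * U y)
    rw [Qp_add]
    calc x * y = ((U x : F) * Qp q (E x)) * ((U y : F) * Qp q (E y)) := by
          rw [← hQE, ← hQE]
      _ = ((U x * U y : Fˣ) : F) * (Qp q (E x) * Qp q (E y)) := by
          rw [Units.val_mul, mul_mul_mul_comm]
  have hQp_one : Qp q (fun _ => 1) = P := by rw [Qp_const, pow_one, hPdef]
  have hE_P : E P = fun _ => 1 := by
    apply hE_eq _ 1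
    rw [Units.val_one, one_mul, hQp_one]
  have hE_pow_P : ∀ n : ℕ, E (P ^ n) = fun _ => n := by
    intro n
    apply hE_eq _ 1
    rw [Units.val_one, one_mul, Qp_const, hPdef]
  have split : ∀ x : F, (∀ i, 1 ≤ E x i) →
      x = P * ((U x : F) * Qp q (fun i => E x i - 1)) := by
    intro x hx
    conv_lhs => rw [hQE x]
    have h1 : Qp q (E x) = Qp q ((fun _ => 1) + fun i => E x i - 1) := by
      congr 1
      funext i
      have := hx i
      simp only [Pi.add_apply]
      omega
    rw [h1, Qp_add, hQp_one, mul_left_comm]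
  have hPdvd_of : ∀ x : F, (∀ i, 1 ≤ E x i) → P ∣ x := fun x hx => ⟨_, split x hx⟩
  have hdvd_E : ∀ x : F, P ∣ x → ∀ i, 1 ≤ E x i := by
    rintro x ⟨y, rfl⟩ i
    rw [hE_mul, hE_P]
    simp
  have hPne : ¬ IsUnit P := fun h =>
    (hq ⟨0, hs0⟩).1 (isUnit_of_dvd_unit
      (hPdef ▸ Finset.dvd_prod_of_mem q (Finset.mem_univ _)) h)
  have coe_unit : ∀ a : H, IsUnit a → IsUnit (a : F) := by
    rintro a ⟨u, rfl⟩
    exact IsUnit.of_mul_eq_one (((u⁻¹ : Hˣ) : H) : F) (congrArg Subtype.val u.mul_inv)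
  have unit_iff : ∀ a : H, IsUnit a ↔ ¬ P ∣ (a : F) := by
    intro a
    constructor
    · intro h hd
      exact hPne (isUnit_of_dvd_unit hd (coe_unit a h))
    · intro h
      by_contra hun
      obtain ⟨y, hy⟩ := hsemi a hun
      exact h ⟨y, hy⟩
  have mem_of_dvd : ∀ x : F, P ∣ x → x ∈ H := by
    rintro x ⟨y, rfl⟩
    exact hsub y
  let ι : H →* F := { toFun := Subtype.val, map_one' := rfl, map_mul' := fun _ _ => rfl }
  have coe_prod : ∀ {k : ℕ} (f : Fin k → H), ((∏ j, f j : H) : F) = ∏ j, ((f j : F)) :=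
    fun f => map_prod ι f Finset.univ
  have hE_prod : ∀ (k : ℕ) (g : Fin k → F), E (∏ j, g j) = ∑ j, E (g j) := by
    intro k
    induction k with
    | zero =>
        intro g
        simp only [Fin.prod_univ_zero, Fin.sum_univ_zero]
        exact hE_eq 1 1 0 (by rw [Units.val_one, one_mul, show Qp q 0 = 1 from by simp [Qp]])
    | succ n ih =>
        intro g
        rw [Fin.prod_univ_succ, Fin.sum_univ_succ, hE_mul, ih]
  have irr_iff : ∀ a : H, Irreducible a ↔
      (∀ i, 1 ≤ E ((a : F)) i) ∧ (∃ i, E ((a : F)) i = 1) := by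
    intro a
    constructor
    · rintro ⟨hu, hsplit⟩
      have hd : P ∣ (a : F) := by
        by_contra h
        exact hu ((unit_iff a).2 h)
      have h1 : ∀ i, 1 ≤ E ((a : F)) i := hdvd_E _ hd
      refine ⟨h1, ?_⟩
      by_contra h2
      push_neg at h2
      have h2' : ∀ i, 2 ≤ E ((a : F)) i := fun i => by
        have ha1 := h1 i; have ha2 := h2 i; omega
      have hEz : E ((U ((a : F)) : F) * Qp q (fun i => E ((a : F)) i - 1))
          = fun i => E ((a : F)) i - 1 := hE_eq _ _ _ rfl
      have hPz : P ∣ (U ((a : F)) : F) * Qp q (fun i => E ((a : F)) i - 1) := by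
        apply hPdvd_of
        rw [hEz]
        intro i
        show 1 ≤ E ((a : F)) i - 1
        have := h2' i
        omega
      have haz : (a : F) = P * ((U ((a : F)) : F) * Qp q (fun i => E ((a : F)) i - 1)) :=
        split _ h1
      have hPH : P ∈ H := mem_of_dvd P dvd_rfl
      have hzH : (U ((a : F)) : F) * Qp q (fun i => E ((a : F)) i - 1) ∈ H :=
        mem_of_dvd _ hPz
      rcases hsplit (a := ⟨P, hPH⟩) (b := ⟨_, hzH⟩) (Subtype.ext haz) with h | h
      · exact absurd dvd_rfl ((unit_iff _).1 h)
      · exact absurd hPz ((unit_iff _).1 h)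
    · rintro ⟨h1, i₀, hi₀⟩
      constructor
      · intro h
        exact ((unit_iff a).1 h) (hPdvd_of _ h1)
      · intro b c habc
        by_contra hbc
        push_neg at hbc
        obtain ⟨hb, hc⟩ := hbc
        have hdb : P ∣ (b : F) := by
          by_contra h
          exact hb ((unit_iff b).2 h)
        have hdc : P ∣ (c : F) := by
          by_contra h
          exact hc ((unit_iff c).2 h)
        have hsum : E ((a : F)) = E ((b : F)) + E ((c : F)) := by
          rw [habc]
          exact hE_mul _ _
        have h2 := congrFun hsum i₀
        have h3 := hdvd_E _ hdb i₀
        have h4 := hdvd_E _ hdc i₀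
        rw [hi₀] at h2
        simp only [Pi.add_apply] at h2
        omega
  have key : ∀ (a : H) (i₀ : Fin s), ¬ IsUnit a →
      (∀ i, E ((a : F)) i₀ ≤ E ((a : F)) i) →
      elasticity H a = ((max (E ((a : F)) i₀) 2 : ℕ) : ℝ) / 2 := by
    intro a i₀ ha hmin
    have hPa : P ∣ (a : F) := by
      by_contra h
      exact ha ((unit_iff a).2 h)
    have hv1 : ∀ i, 1 ≤ E ((a : F)) i := hdvd_E _ hPa
    have hm1 : 1 ≤ E ((a : F)) i₀ := hv1 i₀
    have hLa : lengthSet H a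
        = {k | ∃ f : Fin k → H, (∀ i, Irreducible (f i)) ∧ a = ∏ i, f i} := by
      unfold lengthSet
      rw [if_neg ha]
    have hk0 : ∀ k ∈ lengthSet H a, k ≠ 0 := by
      intro k hk hk0
      subst hk0
      rw [hLa] at hk
      obtain ⟨f, -, hprod⟩ := hk
      rw [Fin.prod_univ_zero] at hprod
      exact ha (by rw [hprod]; exact isUnit_one)
    have hub : ∀ k ∈ lengthSet H a, k ≤ E ((a : F)) i₀ := by
      intro k hk
      rw [hLa] at hk
      obtain ⟨f, hf, hprod⟩ := hk
      have hEa : E ((a : F)) = ∑ j, E ((f j : F)) := by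
        rw [hprod, coe_prod, hE_prod]
      have hge : ∀ j, 1 ≤ E ((f j : F)) i₀ := by
        intro j
        refine hdvd_E _ ?_ i₀
        by_contra h
        exact (hf j).not_isUnit ((unit_iff _).2 h)
      calc k = ∑ _j : Fin k, 1 := by simp
        _ ≤ ∑ j, E ((f j : F)) i₀ := Finset.sum_le_sum fun j _ => hge j
        _ = E ((a : F)) i₀ := by rw [hEa, Finset.sum_apply]
    obtain ⟨m', hm'⟩ : ∃ m', E ((a : F)) i₀ = m' + 1 := ⟨E ((a : F)) i₀ - 1, by omega⟩
    have hP_mem : P ∈ H := mem_of_dvd _ dvd_rfl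
    have hPirr : Irreducible (⟨P, hP_mem⟩ : H) :=
      (irr_iff ⟨P, hP_mem⟩).2
        (show (∀ i, 1 ≤ E P i) ∧ (∃ i, E P i = 1) from
          ⟨fun i => le_of_eq (congrFun hE_P i).symm, ⟨i₀, congrFun hE_P i₀⟩⟩)
    have hmem : E ((a : F)) i₀ ∈ lengthSet H a := by
      rw [hLa, hm']
      have hw1 : ∀ i, 1 ≤ E ((a : F)) i - m' := by
        intro i
        have h1 := hmin i
        omega
      have hEA : E ((U ((a : F)) : F) * Qp q (fun i => E ((a : F)) i - m'))
          = fun i => E ((a : F)) i - m' := hE_eq _ _ _ rfl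
      have hAmem : (U ((a : F)) : F) * Qp q (fun i => E ((a : F)) i - m') ∈ H := by
        apply mem_of_dvd
        apply hPdvd_of
        rw [hEA]
        exact hw1
      have hAirr : Irreducible (⟨_, hAmem⟩ : H) :=
        (irr_iff ⟨_, hAmem⟩).2
          (show (∀ i, 1 ≤ E _ i) ∧ (∃ i, E _ i = 1) from by
            rw [hEA]
            exact ⟨hw1, ⟨i₀, show E ((a : F)) i₀ - m' = 1 by omega⟩⟩)
      refine ⟨Fin.cons ⟨_, hAmem⟩ (fun _ => ⟨P, hP_mem⟩), ?_, ?_⟩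
      · intro j
        refine Fin.cases ?_ (fun j' => ?_) j
        · rw [Fin.cons_zero]; exact hAirr
        · rw [Fin.cons_succ]; exact hPirr
      · apply Subtype.ext
        rw [coe_prod, Fin.prod_univ_succ]
        simp only [Fin.cons_zero, Fin.cons_succ]
        rw [Finset.prod_const, Finset.card_univ, Fintype.card_fin]
        show (a : F) = (U ((a : F)) : F) * Qp q (fun i => E ((a : F)) i - m') * P ^ m'
        have hsplitQ : Qp q (E ((a : F)))
            = Qp q (fun i => E ((a : F)) i - m') * P ^ m' := by
          rw [hPdef, ← Qp_const q m', ← Qp_add]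
          congr 1
          funext i
          have := hmin i
          simp only [Pi.add_apply]
          omega
        conv_lhs => rw [hQE ((a : F))]
        rw [hsplitQ, mul_assoc]
    have hsup : sSup (lengthSet H a) = E ((a : F)) i₀ :=
      IsGreatest.csSup_eq ⟨hmem, hub⟩
    rcases Nat.lt_or_ge (E ((a : F)) i₀) 2 with h2 | h2
    · have hm1' : E ((a : F)) i₀ = 1 := by omega
      have hinf : sInf (lengthSet H a) = 1 :=
        IsLeast.csInf_eq ⟨hm1' ▸ hmem, fun k hk => by have := hk0 k hk; omega⟩
      unfold elasticity
      rw [if_neg ha, hsup, hinf, hm1']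
      norm_num
    · have hne1 : (1 : ℕ) ∉ lengthSet H a := by
        intro hk
        rw [hLa] at hk
        obtain ⟨f, hf, hprod⟩ := hk
        rw [Fin.prod_univ_one] at hprod
        obtain ⟨-, i, hi⟩ := (irr_iff (f 0)).1 (hf 0)
        have h3 : E ((a : F)) i = 1 := by rw [hprod]; exact hi
        have := hmin i
        omega
      have h2mem : (2 : ℕ) ∈ lengthSet H a := by
        rw [hLa]
        obtain ⟨j₁, hj₁⟩ := Fintype.exists_ne_of_one_lt_card
          (by rw [Fintype.card_fin]; omega) i₀
        have hv2 : ∀ i, 2 ≤ E ((a : F)) i := fun i => le_trans h2 (hmin i)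
        have hEB : E ((U ((a : F)) : F)
            * Qp q (fun i => if i = i₀ then 1 else E ((a : F)) i - 1))
            = fun i => if i = i₀ then 1 else E ((a : F)) i - 1 := hE_eq _ _ _ rfl
        have hEC : E (Qp q (fun i => if i = i₀ then E ((a : F)) i - 1 else 1))
            = fun i => if i = i₀ then E ((a : F)) i - 1 else 1 :=
          hE_eq _ 1 _ (by rw [Units.val_one, one_mul])
        have hB1 : ∀ i, 1 ≤ (fun i => if i = i₀ then 1 else E ((a : F)) i - 1) i := by
          intro i
          dsimp only
          split
          · omega
          · have := hv2 i; omega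
        have hC1 : ∀ i, 1 ≤ (fun i => if i = i₀ then E ((a : F)) i - 1 else 1) i := by
          intro i
          dsimp only
          split
          · have := hv2 i; omega
          · omega
        have hBmem : (U ((a : F)) : F)
            * Qp q (fun i => if i = i₀ then 1 else E ((a : F)) i - 1) ∈ H :=
          mem_of_dvd _ (hPdvd_of _ (by rw [hEB]; exact hB1))
        have hCmem : Qp q (fun i => if i = i₀ then E ((a : F)) i - 1 else 1) ∈ H :=
          mem_of_dvd _ (hPdvd_of _ (by rw [hEC]; exact hC1))
        have hBirr : Irreducible (⟨_, hBmem⟩ : H) :=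
          (irr_iff ⟨_, hBmem⟩).2
            (show (∀ i, 1 ≤ E _ i) ∧ (∃ i, E _ i = 1) from by
              rw [hEB]
              exact ⟨hB1, ⟨i₀, show (if i₀ = i₀ then 1 else E ((a : F)) i₀ - 1) = 1 by rw [if_pos rfl]⟩⟩)
        have hCirr : Irreducible (⟨_, hCmem⟩ : H) :=
          (irr_iff ⟨_, hCmem⟩).2
            (show (∀ i, 1 ≤ E _ i) ∧ (∃ i, E _ i = 1) from by
              rw [hEC]
              exact ⟨hC1, ⟨j₁, show (if j₁ = i₀ then E ((a : F)) j₁ - 1 else 1) = 1 by rw [if_neg hj₁]⟩⟩)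
        refine ⟨![⟨_, hBmem⟩, ⟨_, hCmem⟩], ?_, ?_⟩
        · intro j
          fin_cases j
          · exact hBirr
          · exact hCirr
        · apply Subtype.ext
          rw [coe_prod, Fin.prod_univ_two]
          show (a : F) = ((U ((a : F)) : F)
              * Qp q (fun i => if i = i₀ then 1 else E ((a : F)) i - 1))
              * Qp q (fun i => if i = i₀ then E ((a : F)) i - 1 else 1)
          conv_lhs => rw [hQE ((a : F))]
          rw [mul_assoc, ← Qp_add]
          congr 2
          funext i
          have := hv2 i
          simp only [Pi.add_apply]
          split_ifs
          · omega
          · omega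
      have hinf : sInf (lengthSet H a) = 2 :=
        IsLeast.csInf_eq ⟨h2mem, fun k hk => by
          rcases Nat.lt_or_ge k 2 with hklt | hkge
          · interval_cases k
            · exact absurd rfl (hk0 0 hk)
            · exact absurd hk hne1
          · exact hkge⟩
      unfold elasticity
      rw [if_neg ha, hsup, hinf, max_eq_left h2]
      norm_num
  ext t
  simp only [Set.mem_setOf_eq]
  constructor
  · rintro ⟨a, rfl⟩
    by_cases ha : IsUnit a
    · refine ⟨2, le_rfl, ?_⟩
      unfold elasticity
      rw [if_pos ha]
      norm_num
    · obtain ⟨i₀, -, hmin⟩ := Finset.exists_min_image Finset.univ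
        (fun i => E ((a : F)) i) ⟨⟨0, hs0⟩, Finset.mem_univ _⟩
      refine ⟨max (E ((a : F)) i₀) 2, le_max_right _ _, ?_⟩
      exact (key a i₀ ha fun i => hmin i (Finset.mem_univ i)).symm ▸ rfl
  · rintro ⟨n, hn, rfl⟩
    have hmm : P ^ n ∈ H := mem_of_dvd _ (dvd_pow_self P (by omega))
    have hnu : ¬ IsUnit (⟨P ^ n, hmm⟩ : H) := by
      intro h
      exact ((unit_iff _).1 h) (dvd_pow_self P (by omega))
    refine ⟨⟨P ^ n, hmm⟩, ?_⟩
    have hEn : E (((⟨P ^ n, hmm⟩ : H) : F)) = fun _ => n := hE_pow_P n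
    rw [key ⟨P ^ n, hmm⟩ ⟨0, hs0⟩ hnu (fun i => by rw [hEn]), hEn]
    show ((max n 2 : ℕ) : ℝ) / 2 = (n : ℝ) / 2
    rw [max_eq_left hn]
end
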